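/- Let K ⊆ 𝓛 and let p : [0,∞) → S_𝓖 be a differentiable solution of the recombination dynamics. Then the projection p_K(t) ∈ ℝ^{𝓖_K} satisfies the projected recombination dynamics with cumulative rate constants: d p_K/dt = Σ_{{I',J'} ∈ 𝓟_K} c̄({I',J'}) (p_{I'} ⊗ p_{J'} − p_K), where 𝓟_K = {{I',J'} : I' ⊆ K, J' = K ∖ I'}, the cumulative rate constant is c̄({I',J'}) = Σ_{{I,J} ∈ 𝓟 : I ∩ K and J ∩ K partition as {I',J'}} c({I,J}), and (p_{I'} ⊗ p_{J'})(u) = p_{I'}(u|_{I'}) · p_{J'}(u|_{J'}) for u ∈ 𝓖_K. -/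

import Mathlib

open Finset

/-- Recombination of gametes `g` and `h` following pattern `{I, Iᶜ}`:
`(g_I h_J)ᵢ = gᵢ` for `i ∈ I` and `= hᵢ` for `i ∈ J = Iᶜ`. -/
def recomb {L : Type} [DecidableEq L] {A : L → Type} (I : Finset L)
    (g h : ∀ i, A i) : ∀ i, A i :=
  fun i => if i ∈ I then g i else h i

/-- The recombination vector field
`F(p) = (1/2) Σ_{g,h} Σ_{{I,J} ∈ 𝓟} c({I,J}) p(g) p(h) (g_I h_J + g_J h_I − g − h)`,
where the sum over unordered patterns `{I,J}` is written as `(1/2) Σ_{I : Finset L}`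
(every unordered pattern `{I, Iᶜ}` corresponds to exactly two subsets `I` and `Iᶜ`;
the rate constants satisfy `c I = c Iᶜ`). -/
noncomputable def recF {L : Type} [Fintype L] [DecidableEq L] {A : L → Type}
    [∀ i, Fintype (A i)] [∀ i, DecidableEq (A i)]
    (c : Finset L → ℝ) (p : (∀ i, A i) → ℝ) : (∀ i, A i) → ℝ :=
  fun x => (1 / 4) * ∑ g : ∀ i, A i, ∑ h : ∀ i, A i, ∑ I : Finset L,
    c I * p g * p h *
      ((if x = recomb I g h then 1 else 0) + (if x = recomb Iᶜ g h then 1 else 0)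
        - (if x = g then 1 else 0) - (if x = h then 1 else 0))

/-- The projection `p_K ∈ ℝ^{𝓖_K}` of `p ∈ ℝ^𝓖` on the loci `K ⊆ 𝓛`:
`p_K(u) = Σ_{g : g|_K = u} p(g)`. -/
noncomputable def proj {L : Type} [Fintype L] [DecidableEq L] {A : L → Type}
    [∀ i, Fintype (A i)] [∀ i, DecidableEq (A i)]
    (p : (∀ i, A i) → ℝ) (K : Finset L) : (∀ i : {x // x ∈ K}, A i.1) → ℝ :=
  fun u => ∑ g : ∀ i, A i, if (∀ i : {x // x ∈ K}, g i.1 = u i) then p g else 0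

/-- For `I' ⊆ K`, the value `p_{I'}(u|_{I'})` of the projection of `p` on the loci `I'`
at the restriction of `u ∈ 𝓖_K`: the sum of `p(g)` over all gametes `g` agreeing with `u`
on `I'`. -/
noncomputable def projOn {L : Type} [Fintype L] [DecidableEq L] {A : L → Type}
    [∀ i, Fintype (A i)] [∀ i, DecidableEq (A i)]
    (p : (∀ i, A i) → ℝ) (K I' : Finset L) (u : ∀ i : {x // x ∈ K}, A i.1) : ℝ :=
  ∑ g : ∀ i, A i, if (∀ i : {x // x ∈ K}, i.1 ∈ I' → g i.1 = u i) then p g else 0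

section Aux

variable {L : Type} [Fintype L] [DecidableEq L] {A : L → Type}
  [∀ i, Fintype (A i)] [∀ i, DecidableEq (A i)]

/-- Indicator of agreeing with `u` on `K`. -/
private noncomputable def bK (K : Finset L) (u : ∀ i : {x // x ∈ K}, A i.1)
    (x : ∀ i, A i) : ℝ :=
  if (∀ i : {y // y ∈ K}, x i.1 = u i) then 1 else 0

/-- Indicator of agreeing with `u` on `I' ⊆ K`. -/
private noncomputable def bO (K I' : Finset L) (u : ∀ i : {x // x ∈ K}, A i.1)
    (g : ∀ i, A i) : ℝ :=
  if (∀ i : {y // y ∈ K}, i.1 ∈ I' → g i.1 = u i) then 1 else 0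

private lemma sum_boole_delta (J : (∀ i, A i) → ℝ) (y : ∀ i, A i) :
    ∑ x : ∀ i, A i, J x * (if x = y then (1:ℝ) else 0) = J y := by
  simp [mul_ite, Finset.sum_ite_eq']

private lemma sum_q_bK (K : Finset L) (u : ∀ i : {x // x ∈ K}, A i.1)
    (q : (∀ i, A i) → ℝ) : ∑ g : ∀ i, A i, q g * bK K u g = proj q K u := by
  simp [bK, proj, mul_boole]

private lemma sum_q_bO (K I' : Finset L) (u : ∀ i : {x // x ∈ K}, A i.1)
    (q : (∀ i, A i) → ℝ) : ∑ g : ∀ i, A i, q g * bO K I' u g = projOn q K I' u := by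
  simp [bO, projOn, mul_boole]

private lemma bK_recomb (K I : Finset L) (u : ∀ i : {x // x ∈ K}, A i.1)
    (g h : ∀ i, A i) :
    bK K u (recomb I g h) = bO K (I ∩ K) u g * bO K (K \ I) u h := by
  have hiff : (∀ i : {y // y ∈ K}, recomb I g h i.1 = u i) ↔
      ((∀ i : {y // y ∈ K}, i.1 ∈ I ∩ K → g i.1 = u i) ∧
        (∀ i : {y // y ∈ K}, i.1 ∈ K \ I → h i.1 = u i)) := by
    constructor
    · intro H
      refine ⟨fun i hi => ?_, fun i hi => ?_⟩
      · have := H i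
        simp only [recomb] at this
        rwa [if_pos (mem_inter.1 hi).1] at this
      · have := H i
        simp only [recomb] at this
        rwa [if_neg (mem_sdiff.1 hi).2] at this
    · rintro ⟨H1, H2⟩ i
      simp only [recomb]
      by_cases hI : i.1 ∈ I
      · rw [if_pos hI]; exact H1 i (mem_inter.2 ⟨hI, i.2⟩)
      · rw [if_neg hI]; exact H2 i (mem_sdiff.2 ⟨i.2, hI⟩)
  simp only [bK, bO, hiff]
  by_cases h1 : (∀ i : {y // y ∈ K}, i.1 ∈ I ∩ K → g i.1 = u i)
  · by_cases h2 : (∀ i : {y // y ∈ K}, i.1 ∈ K \ I → h i.1 = u i)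
    · rw [if_pos ⟨h1, h2⟩, if_pos h1, if_pos h2, mul_one]
    · rw [if_neg (fun hpq => h2 hpq.2), if_pos h1, if_neg h2, mul_zero]
  · rw [if_neg (fun hpq => h1 hpq.1), if_neg h1, zero_mul]

private lemma key (c : Finset L → ℝ) (K : Finset L) (q : (∀ i, A i) → ℝ)
    (hq : ∑ g : ∀ i, A i, q g = 1) (u : ∀ i : {x // x ∈ K}, A i.1) :
    proj (recF c q) K u = (1 / 2) * ∑ I' ∈ K.powerset,
      (∑ I ∈ univ.filter (fun I : Finset L => I ∩ K = I'), c I)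
        * (projOn q K I' u * projOn q K (K \ I') u - proj q K u) := by
  -- Step C : evaluation of the inner double sum, for each fixed pattern I
  have stepC : ∀ I : Finset L,
      ∑ g : ∀ i, A i, ∑ h : ∀ i, A i,
        c I * (q g * q h *
          (bK K u (recomb I g h) + bK K u (recomb Iᶜ g h) - bK K u g - bK K u h))
      = c I * (2 * (projOn q K (I ∩ K) u * projOn q K (K \ (I ∩ K)) u)
          - 2 * proj q K u) := by
    intro I
    have e1 : Iᶜ ∩ K = K \ I := by ext x; simp [and_comm]
    have e2 : K \ Iᶜ = I ∩ K := by ext x; simp [and_comm]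
    have e3 : K \ (I ∩ K) = K \ I := by
      ext x; simp only [mem_sdiff, mem_inter]; tauto
    have S1 : ∑ g : ∀ i, A i, ∑ h : ∀ i, A i, (q g * q h) * bK K u (recomb I g h)
        = projOn q K (I ∩ K) u * projOn q K (K \ I) u := by
      rw [← sum_q_bO K (I ∩ K) u q, ← sum_q_bO K (K \ I) u q, Finset.sum_mul_sum]
      refine Finset.sum_congr rfl fun g _ => Finset.sum_congr rfl fun h _ => ?_
      rw [bK_recomb]; ring
    have S2 : ∑ g : ∀ i, A i, ∑ h : ∀ i, A i, (q g * q h) * bK K u (recomb Iᶜ g h)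
        = projOn q K (K \ I) u * projOn q K (I ∩ K) u := by
      rw [← sum_q_bO K (K \ I) u q, ← sum_q_bO K (I ∩ K) u q, Finset.sum_mul_sum]
      refine Finset.sum_congr rfl fun g _ => Finset.sum_congr rfl fun h _ => ?_
      rw [bK_recomb, e1, e2]; ring
    have S3 : ∑ g : ∀ i, A i, ∑ h : ∀ i, A i, (q g * q h) * bK K u g
        = proj q K u := by
      have : ∑ g : ∀ i, A i, ∑ h : ∀ i, A i, (q g * q h) * bK K u g
          = (∑ g : ∀ i, A i, q g * bK K u g) * (∑ h : ∀ i, A i, q h) := by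
        rw [Finset.sum_mul_sum]
        exact Finset.sum_congr rfl fun g _ => Finset.sum_congr rfl fun h _ => by ring
      rw [this, hq, mul_one, sum_q_bK]
    have S4 : ∑ g : ∀ i, A i, ∑ h : ∀ i, A i, (q g * q h) * bK K u h
        = proj q K u := by
      have : ∑ g : ∀ i, A i, ∑ h : ∀ i, A i, (q g * q h) * bK K u h
          = (∑ g : ∀ i, A i, q g) * (∑ h : ∀ i, A i, q h * bK K u h) := by
        rw [Finset.sum_mul_sum]
        exact Finset.sum_congr rfl fun g _ => Finset.sum_congr rfl fun h _ => by ring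
      rw [this, hq, one_mul, sum_q_bK]
    calc ∑ g : ∀ i, A i, ∑ h : ∀ i, A i,
          c I * (q g * q h *
            (bK K u (recomb I g h) + bK K u (recomb Iᶜ g h) - bK K u g - bK K u h))
        = c I * ∑ g : ∀ i, A i, ∑ h : ∀ i, A i,
            ((q g * q h) * bK K u (recomb I g h) + (q g * q h) * bK K u (recomb Iᶜ g h)
              - (q g * q h) * bK K u g - (q g * q h) * bK K u h) := by
          rw [Finset.mul_sum]
          refine Finset.sum_congr rfl fun g _ => ?_
          rw [Finset.mul_sum]
          exact Finset.sum_congr rfl fun h _ => by ring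
      _ = c I * ((∑ g : ∀ i, A i, ∑ h : ∀ i, A i, (q g * q h) * bK K u (recomb I g h))
            + (∑ g : ∀ i, A i, ∑ h : ∀ i, A i, (q g * q h) * bK K u (recomb Iᶜ g h))
            - (∑ g : ∀ i, A i, ∑ h : ∀ i, A i, (q g * q h) * bK K u g)
            - (∑ g : ∀ i, A i, ∑ h : ∀ i, A i, (q g * q h) * bK K u h)) := by
          congr 1
          simp only [Finset.sum_sub_distrib, Finset.sum_add_distrib]
      _ = c I * (2 * (projOn q K (I ∩ K) u * projOn q K (K \ (I ∩ K)) u)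
            - 2 * proj q K u) := by
          rw [S1, S2, S3, S4, e3]; ring
  -- Step B : rewrite the projected vector field as a sum over patterns I
  have stepB : proj (recF c q) K u
      = (1 / 4) * ∑ I : Finset L, ∑ g : ∀ i, A i, ∑ h : ∀ i, A i,
          c I * (q g * q h *
            (bK K u (recomb I g h) + bK K u (recomb Iᶜ g h) - bK K u g - bK K u h)) := by
    calc proj (recF c q) K u
        = ∑ x : ∀ i, A i, bK K u x * recF c q x := by
          refine Finset.sum_congr rfl fun x _ => ?_
          simp only [bK, boole_mul]
      _ = ∑ x : ∀ i, A i, ∑ g : ∀ i, A i, ∑ h : ∀ i, A i, ∑ I : Finset L,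
            (1 / 4) * (c I * (q g * q h *
              (bK K u x * (if x = recomb I g h then (1:ℝ) else 0)
                + bK K u x * (if x = recomb Iᶜ g h then (1:ℝ) else 0)
                - bK K u x * (if x = g then (1:ℝ) else 0)
                - bK K u x * (if x = h then (1:ℝ) else 0)))) := by
          refine Finset.sum_congr rfl fun x _ => ?_
          simp only [recF, Finset.mul_sum]
          exact Finset.sum_congr rfl fun g _ => Finset.sum_congr rfl fun h _ =>
            Finset.sum_congr rfl fun I _ => by ring
      _ = ∑ g : ∀ i, A i, ∑ h : ∀ i, A i, ∑ I : Finset L, ∑ x : ∀ i, A i,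
            (1 / 4) * (c I * (q g * q h *
              (bK K u x * (if x = recomb I g h then (1:ℝ) else 0)
                + bK K u x * (if x = recomb Iᶜ g h then (1:ℝ) else 0)
                - bK K u x * (if x = g then (1:ℝ) else 0)
                - bK K u x * (if x = h then (1:ℝ) else 0)))) := by
          rw [Finset.sum_comm]
          refine Finset.sum_congr rfl fun g _ => ?_
          rw [Finset.sum_comm]
          refine Finset.sum_congr rfl fun h _ => ?_
          rw [Finset.sum_comm]
      _ = ∑ g : ∀ i, A i, ∑ h : ∀ i, A i, ∑ I : Finset L,
            (1 / 4) * (c I * (q g * q h *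
              (bK K u (recomb I g h) + bK K u (recomb Iᶜ g h) - bK K u g - bK K u h))) := by
          refine Finset.sum_congr rfl fun g _ => Finset.sum_congr rfl fun h _ =>
            Finset.sum_congr rfl fun I _ => ?_
          have ptw : ∀ x : ∀ i, A i,
              (1 / 4) * (c I * (q g * q h *
                (bK K u x * (if x = recomb I g h then (1:ℝ) else 0)
                  + bK K u x * (if x = recomb Iᶜ g h then (1:ℝ) else 0)
                  - bK K u x * (if x = g then (1:ℝ) else 0)
                  - bK K u x * (if x = h then (1:ℝ) else 0))))
              = ((1 / 4) * (c I * (q g * q h))) *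
                  (bK K u x * (if x = recomb I g h then (1:ℝ) else 0))
                + ((1 / 4) * (c I * (q g * q h))) *
                  (bK K u x * (if x = recomb Iᶜ g h then (1:ℝ) else 0))
                - ((1 / 4) * (c I * (q g * q h))) *
                  (bK K u x * (if x = g then (1:ℝ) else 0))
                - ((1 / 4) * (c I * (q g * q h))) *
                  (bK K u x * (if x = h then (1:ℝ) else 0)) := fun x => by ring
          simp only [ptw]
          rw [Finset.sum_sub_distrib, Finset.sum_sub_distrib, Finset.sum_add_distrib,
            ← Finset.mul_sum, ← Finset.mul_sum, ← Finset.mul_sum, ← Finset.mul_sum,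
            sum_boole_delta, sum_boole_delta, sum_boole_delta, sum_boole_delta]
          ring
      _ = ∑ I : Finset L, ∑ g : ∀ i, A i, ∑ h : ∀ i, A i,
            (1 / 4) * (c I * (q g * q h *
              (bK K u (recomb I g h) + bK K u (recomb Iᶜ g h) - bK K u g - bK K u h))) := by
          calc ∑ g : ∀ i, A i, ∑ h : ∀ i, A i, ∑ I : Finset L, (1 / 4) * (c I * (q g * q h *
                (bK K u (recomb I g h) + bK K u (recomb Iᶜ g h) - bK K u g - bK K u h)))
              = ∑ g : ∀ i, A i, ∑ I : Finset L, ∑ h : ∀ i, A i, (1 / 4) * (c I * (q g * q h *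
                (bK K u (recomb I g h) + bK K u (recomb Iᶜ g h) - bK K u g - bK K u h))) :=
                Finset.sum_congr rfl fun g _ => Finset.sum_comm
            _ = _ := Finset.sum_comm
      _ = (1 / 4) * ∑ I : Finset L, ∑ g : ∀ i, A i, ∑ h : ∀ i, A i,
            c I * (q g * q h *
              (bK K u (recomb I g h) + bK K u (recomb Iᶜ g h) - bK K u g - bK K u h)) := by
          rw [Finset.mul_sum]
          refine Finset.sum_congr rfl fun I _ => ?_
          rw [Finset.mul_sum]
          refine Finset.sum_congr rfl fun g _ => ?_
          rw [Finset.mul_sum]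
  rw [stepB]
  calc (1 / 4) * ∑ I : Finset L, ∑ g : ∀ i, A i, ∑ h : ∀ i, A i,
        c I * (q g * q h *
          (bK K u (recomb I g h) + bK K u (recomb Iᶜ g h) - bK K u g - bK K u h))
      = (1 / 4) * ∑ I : Finset L,
          c I * (2 * (projOn q K (I ∩ K) u * projOn q K (K \ (I ∩ K)) u)
            - 2 * proj q K u) := by
        rw [mul_eq_mul_left_iff]
        exact Or.inl (Finset.sum_congr rfl fun I _ => stepC I)
    _ = (1 / 2) * ∑ I : Finset L,
          c I * (projOn q K (I ∩ K) u * projOn q K (K \ (I ∩ K)) u - proj q K u) := by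
        rw [Finset.mul_sum, Finset.mul_sum]
        exact Finset.sum_congr rfl fun I _ => by ring
    _ = (1 / 2) * ∑ I' ∈ K.powerset,
          (∑ I ∈ univ.filter (fun I : Finset L => I ∩ K = I'), c I)
            * (projOn q K I' u * projOn q K (K \ I') u - proj q K u) := by
        congr 1
        rw [← Finset.sum_fiberwise_of_maps_to (s := (univ : Finset (Finset L)))
          (t := K.powerset) (g := fun I : Finset L => I ∩ K)
          (fun (I : Finset L) (_ : I ∈ univ) => mem_powerset.2 inter_subset_right)
          (fun I : Finset L =>
            c I * (projOn q K (I ∩ K) u * projOn q K (K \ (I ∩ K)) u - proj q K u))]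
        refine Finset.sum_congr rfl fun I' _ => ?_
        rw [Finset.sum_mul]
        refine Finset.sum_congr rfl fun I hI => ?_
        rw [(mem_filter.1 hI).2]

end Aux

/-- **The projected dynamics (projection on a subset `K` of loci).**
Along a differentiable solution of the recombination dynamics in the simplex, the
projection `p_K` satisfies the projected recombination dynamics with cumulative rate
constants: `d p_K/dt = Σ_{{I',J'} ∈ 𝓟_K} c̄({I',J'}) (p_{I'} ⊗ p_{J'} − p_K)`, where
`c̄({I',J'}) = Σ_{{I,J} ∈ 𝓟 : {I,J} ≥ {I',J'}} c({I,J})`; the sum over unordered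
subpatterns `{I', K \ I'}` is written as `(1/2) Σ_{I' ⊆ K}`, with the cumulative rate
constant of `I' ⊆ K` given by `Σ_{I : I ∩ K = I'} c(I)`. -/
theorem projected_dynamics
    {L : Type} [Fintype L] [DecidableEq L]
    (A : L → Type) [∀ i, Fintype (A i)] [∀ i, DecidableEq (A i)]
    (c : Finset L → ℝ) (hc : ∀ I, 0 ≤ c I) (hcsym : ∀ I, c I = c Iᶜ)
    (K : Finset L)
    (p : ℝ → (∀ i, A i) → ℝ)
    (hsimplex : ∀ t, 0 ≤ t → (∀ g, 0 ≤ p t g) ∧ ∑ g : ∀ i, A i, p t g = 1)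
    (hode : ∀ t, 0 ≤ t → HasDerivAt p (recF c (p t)) t) :
    ∀ t, 0 ≤ t →
      HasDerivAt (fun s => proj (p s) K)
        (fun u => (1 / 2) * ∑ I' ∈ K.powerset,
          (∑ I ∈ univ.filter (fun I : Finset L => I ∩ K = I'), c I)
            * (projOn (p t) K I' u * projOn (p t) K (K \ I') u - proj (p t) K u)) t := by
  intro t ht
  have hq := (hsimplex t ht).2
  have hder : ∀ g : ∀ i, A i, HasDerivAt (fun s => p s g) (recF c (p t) g) t :=
    fun g => hasDerivAt_pi.1 (hode t ht) g
  have main : HasDerivAt (fun s => proj (p s) K) (proj (recF c (p t)) K) t := by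
    rw [hasDerivAt_pi]
    intro u
    have hterm : ∀ g : ∀ i, A i,
        HasDerivAt (fun s => if (∀ i : {x // x ∈ K}, g i.1 = u i) then p s g else 0)
          (if (∀ i : {x // x ∈ K}, g i.1 = u i) then recF c (p t) g else 0) t := by
      intro g
      by_cases hg : (∀ i : {x // x ∈ K}, g i.1 = u i)
      · simp only [if_pos hg]; exact hder g
      · simp only [if_neg hg]; exact hasDerivAt_const t 0
    exact HasDerivAt.fun_sum (fun g _ => hterm g)
  have e : (fun u => (1 / 2) * ∑ I' ∈ K.powerset,
        (∑ I ∈ univ.filter (fun I : Finset L => I ∩ K = I'), c I)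
          * (projOn (p t) K I' u * projOn (p t) K (K \ I') u - proj (p t) K u))
      = proj (recF c (p t)) K :=
    funext fun u => (key c K (p t) hq u).symm
  rw [e]
  exact main
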